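/- Let a ≥ 2 be an integer and let ν be a partition all of whose elements are at least a. Define S(ν,a) to be the set of partitions μ with all elements ≥ a for which there exist an integer j′ ≥ a and a partition π with all elements < a such that Σπ + Σμ = j′ + Σν, 1^{j′}·ν ≤ π·μ in the refinement order, and 1^{j′−a}·a·ν ≤ π·μ fails. Then: (i) S(ν,a) is a finite set; and (ii) for every integer j ≥ a, every abelian group A, and every function W from partitions to A, ∑_{λ : 1^{j−a}·a·ν ≤ λ} W(λ) = ∑_{λ : 1^{j}·ν ≤ λ} W(λ) − ∑_{μ ∈ S(ν,a)} ∑_{π} W(π·μ), where the inner sum runs over all partitions π with all elements < a and Σπ = j − Σμ + Σν (an empty sum if this quantity is negative), and each outer sum over λ runs over the finitely many partitions above the indicated partition in the refinement order. (This is Proposition 5.13(a) of the paper, with w_λ replaced by an arbitrary function W, which is legitimate since the proof establishes the underlying decomposition of sets of partitions.) -/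

import Mathlib

/-- An elementary merge replaces two elements `x`, `y` of a multiset by the single
element `x + y`. -/
def ElemMerge {M : Type*} [AddCommMonoid M] (μ ν : Multiset M) : Prop :=
  ∃ (x y : M) (rest : Multiset M), μ = x ::ₘ y ::ₘ rest ∧ ν = (x + y) ::ₘ rest

/-- The refinement order: `Refines μ λ` iff `λ` can be obtained from `μ` by a finite
(possibly empty) sequence of elementary merges. -/
def Refines {M : Type*} [AddCommMonoid M] : Multiset M → Multiset M → Prop :=
  Relation.ReflTransGen ElemMerge

/-- The set `S(ν,a)` of the paper: partitions `μ` with all elements `≥ a` such that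
for some `j′ ≥ a` and some partition `π` with all elements `< a` satisfying
`Σπ + Σμ = j′ + Σν`, one has `1^{j′}·ν ≤ π·μ` but not `1^{j′−a}·a·ν ≤ π·μ`. -/
def Spart (a : ℕ) (ν : Multiset ℕ) : Set (Multiset ℕ) :=
  {μ | (∀ x ∈ μ, a ≤ x) ∧ ∃ j' : ℕ, a ≤ j' ∧ ∃ π : Multiset ℕ,
      (∀ x ∈ π, 0 < x ∧ x < a) ∧ π.sum + μ.sum = j' + ν.sum ∧
      Refines (Multiset.replicate j' 1 + ν) (π + μ) ∧
      ¬ Refines (Multiset.replicate (j' - a) 1 + (a ::ₘ ν)) (π + μ)}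

open Multiset

lemma refines_refl (s : Multiset ℕ) : Refines s s := Relation.ReflTransGen.refl

lemma refines_add_right {s t w : Multiset ℕ} (h : Refines s t) : Refines (s + w) (t + w) := by
  induction h with
  | refl => exact refines_refl _
  | tail _ hm ih =>
    obtain ⟨x, y, rest, rfl, rfl⟩ := hm
    exact ih.tail ⟨x, y, rest + w, by simp [cons_add], by simp [cons_add]⟩

lemma refines_add {s t u v : Multiset ℕ} (h1 : Refines s t) (h2 : Refines u v) :
    Refines (s + u) (t + v) := by
  have h3 : Refines (s + u) (t + u) := refines_add_right h1
  have h4 : Refines (u + t) (v + t) := refines_add_right h2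
  rw [add_comm u t, add_comm v t] at h4
  exact h3.trans h4

lemma refines_sum_eq {s t : Multiset ℕ} (h : Refines s t) : t.sum = s.sum := by
  induction h with
  | refl => rfl
  | tail _ hm ih =>
    obtain ⟨x, y, rest, rfl, rfl⟩ := hm
    simp only [sum_cons] at ih ⊢
    omega

lemma refines_card_le {s t : Multiset ℕ} (h : Refines s t) : card t ≤ card s := by
  induction h with
  | refl => exact le_refl _
  | tail _ hm ih =>
    obtain ⟨x, y, rest, rfl, rfl⟩ := hm
    simp only [card_cons] at ih ⊢
    omega

lemma refines_pos {s t : Multiset ℕ} (h : Refines s t) (hs : ∀ x ∈ s, 0 < x) :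
    ∀ x ∈ t, 0 < x := by
  induction h with
  | refl => exact hs
  | tail _ hm ih =>
    obtain ⟨x, y, rest, rfl, rfl⟩ := hm
    intro z hz
    rcases mem_cons.1 hz with rfl | hz
    · have hx := ih x (by simp)
      omega
    · exact ih z (by simp [hz])

lemma refines_to_single : ∀ (s : Multiset ℕ), s ≠ 0 → Refines s {s.sum} := by
  have key : ∀ (n : ℕ) (s : Multiset ℕ), card s = n → s ≠ 0 → Refines s {s.sum} := by
    intro n
    induction n with
    | zero => intro s hc h0; simp [card_eq_zero] at hc; exact absurd hc h0
    | succ n IH =>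
      intro s hc h0
      obtain ⟨x, hx⟩ := exists_mem_of_ne_zero h0
      obtain ⟨t, rfl⟩ := exists_cons_of_mem hx
      rcases eq_or_ne t 0 with rfl | ht
      · simpa using refines_refl {x}
      · obtain ⟨y, hy⟩ := exists_mem_of_ne_zero ht
        obtain ⟨r, rfl⟩ := exists_cons_of_mem hy
        have hmerge : ElemMerge (x ::ₘ y ::ₘ r) ((x + y) ::ₘ r) := ⟨x, y, r, rfl, rfl⟩
        have hrec : Refines ((x + y) ::ₘ r) {((x + y) ::ₘ r).sum} := by
          apply IH
          · simp at hc ⊢; omega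
          · simp
        have hsum : ((x + y) ::ₘ r).sum = (x ::ₘ y ::ₘ r).sum := by simp; omega
        rw [hsum] at hrec
        exact Relation.ReflTransGen.head hmerge hrec
  exact fun s => key (card s) s rfl

-- helper: Rel gives partner for each left element
lemma rel_exists_right {α β : Type*} {r : α → β → Prop} {s : Multiset α} {t : Multiset β}
    (h : Multiset.Rel r s t) : ∀ x ∈ s, ∃ y ∈ t, r x y := by
  induction h with
  | zero => simp
  | cons hab h ih =>
    intro x hx
    rcases mem_cons.1 hx with rfl | hx
    · exact ⟨_, mem_cons_self _ _, hab⟩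
    · obtain ⟨y, hy, hr⟩ := ih x hx
      exact ⟨y, mem_cons_of_mem hy, hr⟩

lemma rel_exists_left {α β : Type*} {r : α → β → Prop} {s : Multiset α} {t : Multiset β}
    (h : Multiset.Rel r s t) : ∀ y ∈ t, ∃ x ∈ s, r x y :=
  rel_exists_right (Multiset.rel_flip.2 h)

lemma join_map_singleton (s : Multiset ℕ) : (s.map (fun c => ({c} : Multiset ℕ))).join = s := by
  induction s using Multiset.induction_on with
  | empty => simp
  | cons x t IH => simp [join_cons, IH, singleton_add]

lemma mem_le_join {B : Multiset ℕ} {P : Multiset (Multiset ℕ)} (h : B ∈ P) : B ≤ P.join := by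
  obtain ⟨P', rfl⟩ := exists_cons_of_mem h
  rw [join_cons]; exact le_add_right _ _

lemma msum_le_of_le {s t : Multiset ℕ} (h : s ≤ t) : s.sum ≤ t.sum := by
  obtain ⟨u, rfl⟩ := Multiset.le_iff_exists_add.1 h
  simp

lemma mcard_le_sum {m : Multiset ℕ} (h : ∀ x ∈ m, 1 ≤ x) : card m ≤ m.sum := by
  induction m using Multiset.induction_on with
  | empty => simp
  | cons x t IH =>
    simp only [card_cons, sum_cons]
    have := h x (mem_cons_self _ _)
    have := IH (fun y hy => h y (mem_cons_of_mem hy))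
    omega

lemma filter_join (p : ℕ → Prop) [DecidablePred p] (S : Multiset (Multiset ℕ)) :
    S.join.filter p = (S.map (Multiset.filter p)).join := by
  induction S using Multiset.induction_on with
  | empty => simp
  | cons B T IH => simp [join_cons, filter_add, IH]

-- characterization of Refines
lemma refines_iff {s t : Multiset ℕ} :
    Refines s t ↔ ∃ P : Multiset (Multiset ℕ), P.join = s ∧
      Multiset.Rel (fun B c => B ≠ 0 ∧ B.sum = c) P t := by
  constructor
  · intro h
    induction h with
    | refl =>
      refine ⟨s.map (fun c => {c}), join_map_singleton s, ?_⟩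
      induction s using Multiset.induction_on with
      | empty => simp
      | cons x t IH =>
        rw [Multiset.map_cons]
        exact Multiset.Rel.cons ⟨Multiset.singleton_ne_zero x, by simp⟩ IH
    | tail _ hm ih =>
      obtain ⟨P, hjoin, hrel⟩ := ih
      obtain ⟨x, y, rest, rfl, rfl⟩ := hm
      obtain ⟨Bx, P1, hBx, hrel1, rfl⟩ := Multiset.rel_cons_right.1 hrel
      obtain ⟨By, P2, hBy, hrel2, rfl⟩ := Multiset.rel_cons_right.1 hrel1
      refine ⟨(Bx + By) ::ₘ P2, ?_, ?_⟩
      · rw [join_cons] at hjoin ⊢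
        rw [join_cons] at hjoin
        rw [← hjoin]; rw [add_assoc]
      · exact Multiset.Rel.cons ⟨by simp [hBx.1], by rw [sum_add, hBx.2, hBy.2]⟩ hrel2
  · rintro ⟨P, rfl, hrel⟩
    induction hrel with
    | zero => simpa using refines_refl 0
    | @cons B c P' t' hBc _ IH =>
      rw [join_cons]
      have h1 : Refines B {c} := by
        have := refines_to_single B hBc.1
        rwa [hBc.2] at this
      simpa [singleton_add] using refines_add h1 IH

def Dom (s t : Multiset ℕ) : Prop :=
  ∃ P : Multiset (Multiset ℕ), P.join = s ∧ Multiset.Rel (fun B c => B.sum ≤ c) P t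

lemma rel_join_sum_le {P : Multiset (Multiset ℕ)} {t : Multiset ℕ}
    (hrel : Multiset.Rel (fun B c => B.sum ≤ c) P t) : P.join.sum ≤ t.sum := by
  induction hrel with
  | zero => simp
  | cons hBc _ IH =>
    rw [join_cons, sum_add, sum_cons]
    exact add_le_add hBc IH

lemma Dom.sum_le {s t : Multiset ℕ} (h : Dom s t) : s.sum ≤ t.sum := by
  obtain ⟨P, rfl, hrel⟩ := h
  exact rel_join_sum_le hrel

lemma replicate_one_ne_zero {n : ℕ} (h : 0 < n) : Multiset.replicate n 1 ≠ 0 := by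
  intro h0
  have := congrArg Multiset.card h0
  simp at this
  omega

lemma refines_replicate_sum {π : Multiset ℕ} (hπ : ∀ x ∈ π, 0 < x) :
    Refines (Multiset.replicate π.sum 1) π := by
  induction π using Multiset.induction_on with
  | empty => simpa using refines_refl 0
  | cons x t IH =>
    have hsplit : Multiset.replicate (x ::ₘ t).sum 1
        = Multiset.replicate x 1 + Multiset.replicate t.sum 1 := by
      rw [sum_cons, ← Multiset.replicate_add]
    rw [hsplit]
    have h1 : Refines (Multiset.replicate x 1) {x} := by
      have hne : Multiset.replicate x 1 ≠ 0 :=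
        replicate_one_ne_zero (hπ x (mem_cons_self _ _))
      have := refines_to_single _ hne
      rwa [Multiset.sum_replicate, smul_eq_mul, mul_one] at this
    have h2 := IH (fun y hy => hπ y (mem_cons_of_mem hy))
    simpa [singleton_add] using refines_add h1 h2

lemma dom_refines {P : Multiset (Multiset ℕ)} {μ : Multiset ℕ}
    (hrel : Multiset.Rel (fun B c => B.sum ≤ c) P μ) (hpos : ∀ c ∈ μ, 0 < c) :
    Refines (Multiset.replicate (μ.sum - P.join.sum) 1 + P.join) μ := by
  induction hrel with
  | zero => simpa using refines_refl 0
  | @cons B c P' μ' hBc hrel IH =>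
    have h2 : P'.join.sum ≤ μ'.sum := rel_join_sum_le hrel
    have hpos' : ∀ c ∈ μ', 0 < c := fun d hd => hpos d (mem_cons_of_mem hd)
    have hsub : (c ::ₘ μ').sum - ((B ::ₘ P').join).sum
        = (c - B.sum) + (μ'.sum - P'.join.sum) := by
      rw [sum_cons, join_cons, sum_add]; omega
    rw [hsub, Multiset.replicate_add, join_cons]
    have hregroup : Multiset.replicate (c - B.sum) 1 + Multiset.replicate (μ'.sum - P'.join.sum) 1
        + (B + P'.join)
        = (Multiset.replicate (c - B.sum) 1 + B)
          + (Multiset.replicate (μ'.sum - P'.join.sum) 1 + P'.join) := by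
      rw [add_add_add_comm]
    rw [hregroup]
    have hblock : Refines (Multiset.replicate (c - B.sum) 1 + B) {c} := by
      have hne : Multiset.replicate (c - B.sum) 1 + B ≠ 0 := by
        intro h0
        rw [add_eq_zero] at h0
        have hc := hpos c (mem_cons_self _ _)
        have hc1 : c - B.sum = 0 := by
          have := congrArg Multiset.card h0.1
          simpa using this
        have hc2 : B.sum = 0 := by rw [h0.2]; simp
        omega
      have := refines_to_single _ hne
      have hsum : (Multiset.replicate (c - B.sum) 1 + B).sum = c := by
        rw [sum_add, Multiset.sum_replicate, smul_eq_mul, mul_one]; omega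
      rwa [hsum] at this
    simpa [singleton_add] using refines_add hblock (IH hpos')

lemma key_iff {a j : ℕ} (ha : 2 ≤ a) {ν π μ : Multiset ℕ}
    (hν : ∀ x ∈ ν, a ≤ x) (hμ : ∀ x ∈ μ, a ≤ x) (hπ : ∀ x ∈ π, 0 < x ∧ x < a)
    (hsum : π.sum + μ.sum = j + ν.sum) :
    Refines (Multiset.replicate j 1 + ν) (π + μ) ↔ Dom ν μ := by
  constructor
  · intro h
    obtain ⟨P, hjoin, hrel⟩ := refines_iff.1 h
    obtain ⟨P1, P2, hrel1, hrel2, rfl⟩ := Multiset.rel_add_right.1 hrel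
    rw [join_add] at hjoin
    -- every element of join P1 is 1
    have h1 : ∀ x ∈ P1.join, x = 1 := by
      intro x hx
      obtain ⟨B, hB, hxB⟩ := mem_join.1 hx
      obtain ⟨p, hp, hBp⟩ := rel_exists_right hrel1 B hB
      have hxlt : x < a := by
        have hxle : x ≤ B.sum := Multiset.le_sum_of_mem hxB
        have := (hπ p hp).2
        omega
      have hmem : x ∈ Multiset.replicate j 1 + ν := by
        rw [← hjoin]
        exact mem_add.2 (Or.inl hx)
      rcases mem_add.1 hmem with h' | h'
      · exact Multiset.eq_of_mem_replicate h'
      · exact absurd (hν x h') (by omega)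
    have hrep : P1.join = Multiset.replicate (card P1.join) 1 :=
      Multiset.eq_replicate_card.2 h1
    set k := card P1.join with hk
    have hν1 : Multiset.count 1 ν = 0 := by
      rw [Multiset.count_eq_zero]
      intro h1ν
      have := hν 1 h1ν; omega
    have hkj : k ≤ j := by
      have := congrArg (Multiset.count 1) hjoin
      rw [Multiset.count_add, Multiset.count_add, Multiset.count_replicate, hrep,
        Multiset.count_replicate] at this
      simp at this
      omega
    have hjoin2 : P2.join = Multiset.replicate (j - k) 1 + ν := by
      have hjsplit : Multiset.replicate j 1
          = Multiset.replicate k 1 + Multiset.replicate (j - k) 1 := by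
        rw [← Multiset.replicate_add]; congr 1; omega
      rw [hrep] at hjoin
      rw [hjsplit, add_assoc] at hjoin
      exact add_left_cancel hjoin
    refine ⟨P2.map (Multiset.filter (a ≤ ·)), ?_, ?_⟩
    · rw [← _root_.filter_join, hjoin2, filter_add, Multiset.filter_eq_nil.2 ?_,
        Multiset.filter_eq_self.2 hν, zero_add]
      intro x hx
      have := Multiset.eq_of_mem_replicate hx
      omega
    · have : Multiset.Rel (fun B c => (Multiset.filter (a ≤ ·) B).sum ≤ c) P2 μ := by
        refine hrel2.mono (fun B c _ _ hBc => ?_)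
        rw [← hBc.2]
        exact msum_le_of_le (Multiset.filter_le _ _)
      rw [← Multiset.map_id μ]
      exact Multiset.rel_map.2 this
  · intro hdom
    obtain ⟨P, hjoin, hrel⟩ := hdom
    have hνμ : ν.sum ≤ μ.sum := Dom.sum_le ⟨P, hjoin, hrel⟩
    have hμpos : ∀ c ∈ μ, 0 < c := fun c hc => by have := hμ c hc; omega
    have h2 := dom_refines hrel hμpos
    rw [hjoin] at h2
    have h1 := refines_replicate_sum (fun x hx => (hπ x hx).1)
    have hj : j = π.sum + (μ.sum - ν.sum) := by omega
    have hsplit : Multiset.replicate j 1 + ν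
        = Multiset.replicate π.sum 1 + (Multiset.replicate (μ.sum - ν.sum) 1 + ν) := by
      rw [hj, Multiset.replicate_add, add_assoc]
    rw [hsplit]
    exact refines_add h1 h2

lemma rel_strength {a : ℕ} {P : Multiset (Multiset ℕ)} {μ : Multiset ℕ}
    (hrel : Multiset.Rel (fun B c => B.sum ≤ c) P μ) :
    (∀ c ∈ μ, a ≤ c) →
    (¬ ∃ Q : Multiset (Multiset ℕ), Q.join = a ::ₘ P.join ∧
        Multiset.Rel (fun B c => B.sum ≤ c) Q μ) →
    Multiset.Rel (fun B c => B ≠ 0 ∧ c < B.sum + a) P μ := by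
  induction hrel with
  | zero => intro _ _; exact Multiset.Rel.zero
  | @cons B c P' μ' hBc hrel IH =>
    intro hμ hno
    have hno' : ¬ ∃ Q' : Multiset (Multiset ℕ), Q'.join = a ::ₘ P'.join ∧
        Multiset.Rel (fun B c => B.sum ≤ c) Q' μ' := by
      rintro ⟨Q', h1, h2⟩
      refine hno ⟨B ::ₘ Q', ?_, Multiset.Rel.cons hBc h2⟩
      rw [join_cons, h1, join_cons, ← Multiset.singleton_add, ← Multiset.singleton_add,
        add_left_comm]
    have hlt : c < B.sum + a := by
      by_contra hge
      push_neg at hge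
      refine hno ⟨(a ::ₘ B) ::ₘ P', ?_, Multiset.Rel.cons ?_ hrel⟩
      · rw [join_cons, join_cons, Multiset.cons_add]
      · rw [sum_cons]; omega
    have hB : B ≠ 0 := by
      intro h0
      have := hμ c (mem_cons_self _ _)
      rw [h0] at hlt
      simp at hlt
      omega
    exact Multiset.Rel.cons ⟨hB, hlt⟩ (IH (fun d hd => hμ d (mem_cons_of_mem hd)) hno')

lemma spart_bound {a : ℕ} {ν μ : Multiset ℕ} (hμ : ∀ c ∈ μ, a ≤ c)
    (hdom : Dom ν μ) (hnot : ¬ Dom (a ::ₘ ν) μ) :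
    card μ ≤ card ν ∧ ∀ c ∈ μ, c < ν.sum + a := by
  obtain ⟨P, hjoin, hrel⟩ := hdom
  have hs := rel_strength hrel hμ (by
    rintro ⟨Q, h1, h2⟩
    exact hnot ⟨Q, by rw [h1, hjoin], h2⟩)
  constructor
  · have hcard : card P = card μ := Multiset.card_eq_card_of_rel hs
    have hne : ∀ B ∈ P, B ≠ 0 := by
      intro B hB
      obtain ⟨c, _, hr⟩ := rel_exists_right hs B hB
      exact hr.1
    have h1 : card P ≤ card P.join := by
      rw [Multiset.card_join]
      have : card P = card (P.map Multiset.card) := by simp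
      rw [this]
      exact mcard_le_sum (by
        intro x hx
        obtain ⟨B, hB, rfl⟩ := Multiset.mem_map.1 hx
        have := hne B hB
        rw [Nat.one_le_iff_ne_zero]
        simpa [Multiset.card_eq_zero] using this)
    rw [hcard, hjoin] at h1
    omega
  · intro c hc
    obtain ⟨B, hB, hr⟩ := rel_exists_left hs c hc
    have hle : B.sum ≤ ν.sum := by
      rw [← hjoin]
      exact msum_le_of_le (mem_le_join hB)
    have := hr.2
    omega

lemma finite_multisets (n : ℕ) (s : ℕ) :
    {m : Multiset ℕ | card m ≤ n ∧ ∀ x ∈ m, x ≤ s}.Finite := by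
  induction n with
  | zero =>
    apply Set.Finite.subset (Set.finite_singleton (0 : Multiset ℕ))
    rintro m ⟨hc, _⟩
    simp only [Nat.le_zero, Multiset.card_eq_zero] at hc
    simp [hc]
  | succ n IH =>
    apply Set.Finite.subset
      ((Set.finite_singleton (0 : Multiset ℕ)).union
        (Set.Finite.biUnion (Set.finite_Iic s)
          (fun x _ => IH.image (fun m => x ::ₘ m))))
    rintro m ⟨hc, hx⟩
    rcases eq_or_ne m 0 with rfl | hm
    · exact Or.inl rfl
    · obtain ⟨x, hxm⟩ := exists_mem_of_ne_zero hm
      obtain ⟨t, rfl⟩ := exists_cons_of_mem hxm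
      refine Or.inr (Set.mem_biUnion (Set.mem_Iic.2 (hx x hxm)) ?_)
      refine ⟨t, ⟨?_, fun y hy => hx y (mem_cons_of_mem hy)⟩, rfl⟩
      simp at hc
      omega

lemma refines_finite (s : Multiset ℕ) : {t : Multiset ℕ | Refines s t}.Finite := by
  apply Set.Finite.subset (finite_multisets (card s) s.sum)
  intro t ht
  refine ⟨refines_card_le ht, fun x hx => ?_⟩
  have h1 : x ≤ t.sum := Multiset.le_sum_of_mem hx
  rw [refines_sum_eq ht] at h1
  exact h1

lemma spart_eq {a : ℕ} {ν : Multiset ℕ} (ha : 2 ≤ a) (hν : ∀ x ∈ ν, a ≤ x) :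
    Spart a ν = {μ | (∀ x ∈ μ, a ≤ x) ∧ Dom ν μ ∧ ¬ Dom (a ::ₘ ν) μ} := by
  ext μ
  constructor
  · rintro ⟨hμ, j', hj', π, hπ, hsum, href, hnref⟩
    have hν' : ∀ x ∈ a ::ₘ ν, a ≤ x := by
      intro x hx
      rcases mem_cons.1 hx with rfl | hx
      · exact le_refl _
      · exact hν x hx
    have hsum' : π.sum + μ.sum = (j' - a) + (a ::ₘ ν).sum := by
      rw [sum_cons]; omega
    exact ⟨hμ, (key_iff ha hν hμ hπ hsum).1 href,
      fun hd => hnref ((key_iff ha hν' hμ hπ hsum').2 hd)⟩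
  · rintro ⟨hμ, hdom, hnot⟩
    have hle : ν.sum ≤ μ.sum := hdom.sum_le
    have hπ : ∀ x ∈ Multiset.replicate a (1 : ℕ), 0 < x ∧ x < a := by
      intro x hx
      have := Multiset.eq_of_mem_replicate hx
      omega
    have hrs : (Multiset.replicate a (1 : ℕ)).sum = a := by
      rw [Multiset.sum_replicate, smul_eq_mul, mul_one]
    have hν' : ∀ x ∈ a ::ₘ ν, a ≤ x := by
      intro x hx
      rcases mem_cons.1 hx with rfl | hx
      · exact le_refl _
      · exact hν x hx
    refine ⟨hμ, a + (μ.sum - ν.sum), Nat.le_add_right _ _, Multiset.replicate a 1, hπ,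
      by rw [hrs]; omega, (key_iff ha hν hμ hπ (by rw [hrs]; omega)).2 hdom, fun h => hnot ?_⟩
    have hsum' : (Multiset.replicate a (1 : ℕ)).sum + μ.sum
        = (a + (μ.sum - ν.sum) - a) + (a ::ₘ ν).sum := by
      rw [hrs, sum_cons]; omega
    exact (key_iff ha hν' hμ hπ hsum').1 h

lemma filter_decomp {a : ℕ} {π μ : Multiset ℕ} (hπ : ∀ x ∈ π, x < a) (hμ : ∀ x ∈ μ, a ≤ x) :
    (π + μ).filter (fun x => ¬ x < a) = μ := by
  rw [Multiset.filter_add, Multiset.filter_eq_nil.2 (fun x hx h => h (hπ x hx)),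
    Multiset.filter_eq_self.2 (fun x hx => Nat.not_lt.2 (hμ x hx)), zero_add]


/-- Proposition 5.13(a) of the paper, for an arbitrary function `W` from partitions to an
abelian group: `S(ν,a)` is finite, and for `j ≥ a`,
`∑_{λ ≥ 1^{j−a}·a·ν} W(λ) = ∑_{λ ≥ 1^{j}·ν} W(λ) − ∑_{μ ∈ S(ν,a)} ∑_π W(π·μ)`,
where `π` runs over partitions with all elements `< a` and `Σπ = j − Σμ + Σν`. -/
theorem stmt3 {A : Type*} [AddCommGroup A] (W : Multiset ℕ → A)
    (a : ℕ) (ha : 2 ≤ a) (ν : Multiset ℕ) (hν : ∀ x ∈ ν, a ≤ x) :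
    (Spart a ν).Finite ∧
    ∀ j : ℕ, a ≤ j →
      (∑ᶠ lam ∈ {lam : Multiset ℕ |
          Refines (Multiset.replicate (j - a) 1 + (a ::ₘ ν)) lam}, W lam)
      = (∑ᶠ lam ∈ {lam : Multiset ℕ | Refines (Multiset.replicate j 1 + ν) lam}, W lam)
        - ∑ᶠ μ ∈ Spart a ν,
            ∑ᶠ π ∈ {π : Multiset ℕ | (∀ x ∈ π, 0 < x ∧ x < a) ∧
                π.sum + μ.sum = j + ν.sum}, W (π + μ) := by
  have ha0 : 0 < a := by omega
  have hν' : ∀ x ∈ a ::ₘ ν, a ≤ x := by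
    intro x hx
    rcases mem_cons.1 hx with rfl | hx
    · exact le_refl _
    · exact hν x hx
  have hSfin : (Spart a ν).Finite := by
    rw [spart_eq ha hν]
    apply Set.Finite.subset (finite_multisets (card ν) (ν.sum + a))
    rintro μ ⟨hμ, hdom, hnot⟩
    obtain ⟨h1, h2⟩ := spart_bound hμ hdom hnot
    exact ⟨h1, fun c hc => le_of_lt (h2 c hc)⟩
  refine ⟨hSfin, fun j hj => ?_⟩
  set Pi : Multiset ℕ → Set (Multiset ℕ) := fun μ =>
    {π : Multiset ℕ | (∀ x ∈ π, 0 < x ∧ x < a) ∧ π.sum + μ.sum = j + ν.sum} with hPi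
  set Cs : Set (Multiset ℕ) := {lam | Refines (Multiset.replicate j 1 + ν) lam} with hCs
  set Bs : Set (Multiset ℕ) :=
    {lam | Refines (Multiset.replicate (j - a) 1 + (a ::ₘ ν)) lam} with hBs
  have hCfin : Cs.Finite := refines_finite _
  have hBfin : Bs.Finite := refines_finite _
  have hPifin : ∀ μ : Multiset ℕ, (Pi μ).Finite := by
    intro μ
    apply Set.Finite.subset (finite_multisets (j + ν.sum) (j + ν.sum))
    rintro π ⟨hπ, hsum⟩
    have hc : card π ≤ π.sum := mcard_le_sum (fun x hx => (hπ x hx).1)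
    refine ⟨by omega, fun x hx => ?_⟩
    have := Multiset.le_sum_of_mem hx
    omega
  -- B ⊆ C
  have hstep : Refines (Multiset.replicate j 1 + ν)
      (Multiset.replicate (j - a) 1 + (a ::ₘ ν)) := by
    have hsplit : Multiset.replicate j (1 : ℕ)
        = Multiset.replicate (j - a) 1 + Multiset.replicate a 1 := by
      rw [← Multiset.replicate_add]; congr 1; omega
    rw [hsplit, add_assoc]
    have h1 : Refines (Multiset.replicate a (1 : ℕ)) {a} := by
      have := refines_to_single _ (replicate_one_ne_zero ha0)
      rwa [Multiset.sum_replicate, smul_eq_mul, mul_one] at this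
    have := refines_add (refines_refl (Multiset.replicate (j - a) 1))
      (refines_add h1 (refines_refl ν))
    simpa [singleton_add] using this
  have hBC : Bs ⊆ Cs := fun lam h => hstep.trans h
  -- decomposition of C \ B
  have hdecomp : Cs \ Bs = ⋃ μ ∈ Spart a ν, (fun π => π + μ) '' Pi μ := by
    ext lam
    constructor
    · rintro ⟨hC, hB⟩
      have hpos : ∀ x ∈ lam, 0 < x := by
        apply refines_pos hC
        intro x hx
        rcases mem_add.1 hx with hx | hx
        · have := Multiset.eq_of_mem_replicate hx; omega
        · have := hν x hx; omega
      obtain ⟨π, μ0, hπdef, hμ0def⟩ :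
          ∃ π μ0 : Multiset ℕ, π = lam.filter (fun x => x < a)
            ∧ μ0 = lam.filter (fun x => ¬ x < a) := ⟨_, _, rfl, rfl⟩
      have heq : π + μ0 = lam := by
        rw [hπdef, hμ0def]; exact Multiset.filter_add_not _ lam
      have hμel : ∀ x ∈ μ0, a ≤ x := by
        intro x hx
        rw [hμ0def] at hx
        have := Multiset.of_mem_filter hx
        omega
      have hπel : ∀ x ∈ π, 0 < x ∧ x < a := by
        intro x hx
        rw [hπdef] at hx
        exact ⟨hpos x (Multiset.mem_of_mem_filter hx),
          Multiset.of_mem_filter (p := fun y => y < a) hx⟩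
      have hsum : π.sum + μ0.sum = j + ν.sum := by
        have h1 : lam.sum = (Multiset.replicate j (1 : ℕ) + ν).sum := refines_sum_eq hC
        rw [sum_add, Multiset.sum_replicate, smul_eq_mul, mul_one] at h1
        rw [← sum_add, heq, h1]
      have hμS : μ0 ∈ Spart a ν :=
        ⟨hμel, j, hj, π, hπel, hsum, heq ▸ hC, heq ▸ hB⟩
      exact Set.mem_biUnion hμS ⟨π, ⟨hπel, hsum⟩, heq⟩
    · intro hlam
      obtain ⟨μ0, hμS, hmem⟩ := Set.mem_iUnion₂.1 hlam
      obtain ⟨π, ⟨hπel, hsum⟩, rfl⟩ := hmem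
      rw [spart_eq ha hν] at hμS
      obtain ⟨hμel, hdom, hnot⟩ := hμS
      refine ⟨(key_iff ha hν hμel hπel hsum).2 hdom, fun h => hnot ?_⟩
      have hsum' : π.sum + μ0.sum = (j - a) + (a ::ₘ ν).sum := by
        rw [sum_cons]; omega
      exact (key_iff ha hν' hμel hπel hsum').1 h
  have hdisj : (Spart a ν).PairwiseDisjoint (fun μ0 => (fun π => π + μ0) '' Pi μ0) := by
    intro μ1 h1 μ2 h2 hne
    simp only [Function.onFun]
    rw [Set.disjoint_left]
    rintro lam ⟨π1, hπ1, rfl⟩ ⟨π2, hπ2, heq⟩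
    change π2 + μ2 = π1 + μ1 at heq
    apply hne
    have e1 : (π1 + μ1).filter (fun x => ¬ x < a) = μ1 :=
      filter_decomp (fun x hx => (hπ1.1 x hx).2) h1.1
    have e2 : (π2 + μ2).filter (fun x => ¬ x < a) = μ2 :=
      filter_decomp (fun x hx => (hπ2.1 x hx).2) h2.1
    rw [← e1, ← heq, e2]
  have hinj : ∀ μ0 : Multiset ℕ, Set.InjOn (fun π => π + μ0) (Pi μ0) :=
    fun μ0 p _ q _ h => add_right_cancel h
  have hCsum : (∑ᶠ lam ∈ Cs, W lam)
      = (∑ᶠ lam ∈ Bs, W lam) + ∑ᶠ μ ∈ Spart a ν, ∑ᶠ π ∈ Pi μ, W (π + μ) := by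
    have hu : Bs ∪ (Cs \ Bs) = Cs := Set.union_diff_cancel hBC
    rw [← hu, finsum_mem_union Set.disjoint_sdiff_right hBfin hCfin.diff]
    congr 1
    rw [hdecomp, finsum_mem_biUnion hdisj hSfin (fun μ0 _ => (hPifin μ0).image _)]
    exact finsum_mem_congr rfl (fun μ0 _ => finsum_mem_image (hinj μ0))
  rw [hCsum]
  exact (add_sub_cancel_right _ _).symm
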